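/- For all m ≥ 1 and n ≥ 0, the shifted Catalan Hankel determinant satisfies det(C_{n+i+j})_{i,j=0}^{m-1} = ∏_{1 ≤ i ≤ j ≤ n-1} (2m+i+j)/(i+j), where the empty product (n ≤ 1) equals 1. -/

import Mathlib

open Matrix Finset

variable {R : Type*} [CommRing R]

private def djFun (m : ℕ) : (Fin 2 ⊕ Fin m) → Fin (m + 2) :=
  Sum.elim (fun t => if t = 0 then 0 else Fin.last (m + 1)) (fun j => j.succ.castSucc)

private lemma djFun_bij (m : ℕ) : Function.Bijective (djFun m) := by
  rw [Fintype.bijective_iff_injective_and_card]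
  constructor
  · rintro (s | i) (t | j) h <;>
      [skip; skip; skip; skip] <;>
    first
    | (fin_cases s <;> fin_cases t <;> simp_all [djFun, Fin.ext_iff, -Fin.val_eq_zero_iff])
    | (exfalso
       have h' := congrArg Fin.val h
       have hi := (by assumption : Fin m) |>.isLt
       fin_cases s <;> simp [djFun, Fin.ext_iff, -Fin.val_eq_zero_iff] at h' <;> omega)
    | (exfalso
       have h' := congrArg Fin.val h
       fin_cases t <;> simp [djFun, Fin.ext_iff, -Fin.val_eq_zero_iff] at h' <;> omega)
    | (have h' := congrArg Fin.val h
       simp [djFun, Fin.ext_iff, -Fin.val_eq_zero_iff] at h'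
       simp [Fin.ext_iff, h'])
  · simp [Fintype.card_sum]; omega

noncomputable def djEquiv (m : ℕ) : (Fin 2 ⊕ Fin m) ≃ Fin (m + 2) :=
  Equiv.ofBijective _ (djFun_bij m)

@[simp] lemma djEquiv_inl0 (m : ℕ) : djEquiv m (.inl 0) = 0 := rfl
@[simp] lemma djEquiv_inl1 (m : ℕ) : djEquiv m (.inl 1) = Fin.last (m + 1) := rfl
@[simp] lemma djEquiv_inr (m : ℕ) (j : Fin m) : djEquiv m (.inr j) = j.succ.castSucc := rfl

theorem weak_dj {m : ℕ} (X : Matrix (Fin (m + 2)) (Fin (m + 2)) R) :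
    X.det * (X.det *
      (X.submatrix (fun i : Fin m => i.succ.castSucc) (fun i : Fin m => i.succ.castSucc)).det) =
    X.det * ((X.submatrix Fin.succ Fin.succ).det * (X.submatrix Fin.castSucc Fin.castSucc).det
      - (X.submatrix Fin.succ Fin.castSucc).det * (X.submatrix Fin.castSucc Fin.succ).det) := by
  set L : Fin (m + 2) := Fin.last (m + 1) with hL
  have hL0 : L ≠ 0 := by simp [hL, Fin.ext_iff]
  have hmid0 : ∀ j : Fin m, j.succ.castSucc ≠ 0 := by
    intro j; simp [Fin.ext_iff]
  have hmidL : ∀ j : Fin m, j.succ.castSucc ≠ L := by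
    intro j; have := j.isLt; simp [hL, Fin.ext_iff]; omega
  have hmidL' : ∀ j : Fin m, j.castSucc.succ ≠ L := fun j => by simpa using hmidL j
  set B : Matrix (Fin (m + 2)) (Fin (m + 2)) R := Matrix.of (fun j k =>
    if k = 0 then (-1 : R) ^ (j : ℕ) * (X.submatrix Fin.succ j.succAbove).det
    else if k = L then (-1 : R) ^ ((m + 1) + (j : ℕ)) * (X.submatrix Fin.castSucc j.succAbove).det
    else if j = k then 1 else 0) with hB
  have hB0 : ∀ j, B j 0 = (-1 : R) ^ (j : ℕ) * (X.submatrix Fin.succ j.succAbove).det := by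
    intro j; simp [hB]
  have hBL : ∀ j, B j L =
      (-1 : R) ^ ((m + 1) + (j : ℕ)) * (X.submatrix Fin.castSucc j.succAbove).det := by
    intro j; simp [hB, hL0]
  set M : Matrix (Fin (m + 2)) (Fin (m + 2)) R := Matrix.of (fun r k =>
    if k = 0 then (if r = 0 then X.det else 0)
    else if k = L then (if r = L then X.det else 0)
    else X r k) with hM
  have hrow0 : ∀ r : Fin (m + 2), (X.updateRow 0 (X r)).det
      = ∑ j, X r j * ((-1 : R) ^ (j : ℕ) * (X.submatrix Fin.succ j.succAbove).det) := by
    intro r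
    rw [det_succ_row_zero]
    refine Finset.sum_congr rfl fun j _ => ?_
    rw [Matrix.updateRow_self]
    have : (X.updateRow 0 (X r)).submatrix Fin.succ j.succAbove
        = X.submatrix Fin.succ j.succAbove := by
      ext i' j'
      simp [Matrix.updateRow_ne (Fin.succ_ne_zero i')]
    rw [this]; ring
  have hrowL : ∀ r : Fin (m + 2), (X.updateRow L (X r)).det
      = ∑ j, X r j * ((-1 : R) ^ ((m + 1) + (j : ℕ)) * (X.submatrix Fin.castSucc j.succAbove).det) := by
    intro r
    rw [det_succ_row _ L]
    refine Finset.sum_congr rfl fun j _ => ?_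
    rw [Matrix.updateRow_self]
    have hne : ∀ i' : Fin (m + 1), i'.castSucc ≠ L := fun i' => (Fin.castSucc_lt_last i').ne
    have : (X.updateRow L (X r)).submatrix L.succAbove j.succAbove
        = X.submatrix Fin.castSucc j.succAbove := by
      rw [hL, Fin.succAbove_last]
      ext i' j'
      simp [Matrix.updateRow_ne (hne i')]
    rw [this, hL]
    simp only [Fin.val_last]
    ring
  have key1 : X * B = M := by
    ext r k
    rw [Matrix.mul_apply]
    by_cases hk0 : k = 0
    · subst hk0
      have : ∀ j, X r j * B j 0 = X r j * ((-1 : R) ^ (j : ℕ) * (X.submatrix Fin.succ j.succAbove).det) :=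
        fun j => by rw [hB0]
      rw [Finset.sum_congr rfl fun j _ => this j, ← hrow0 r]
      by_cases hr : r = 0
      · subst hr; rw [Matrix.updateRow_eq_self]; simp [hM]
      · rw [show M r 0 = 0 by simp [hM, hr]]
        refine Matrix.det_zero_of_row_eq (Ne.symm hr) ?_
        rw [Matrix.updateRow_self, Matrix.updateRow_ne hr]
    · by_cases hkL : k = L
      · subst hkL
        have : ∀ j, X r j * B j L
            = X r j * ((-1 : R) ^ ((m + 1) + (j : ℕ)) * (X.submatrix Fin.castSucc j.succAbove).det) :=
          fun j => by rw [hBL]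
        rw [Finset.sum_congr rfl fun j _ => this j, ← hrowL r]
        by_cases hr : r = L
        · subst hr; rw [Matrix.updateRow_eq_self]; simp [hM, hL0]
        · rw [show M r L = 0 by simp [hM, hL0, hr]]
          refine Matrix.det_zero_of_row_eq (Ne.symm hr) ?_
          rw [Matrix.updateRow_self, Matrix.updateRow_ne hr]
      · have : ∀ j, X r j * B j k = if j = k then X r j else 0 := by
          intro j
          simp only [hB, Matrix.of_apply, if_neg hk0, if_neg hkL]
          split <;> simp
        rw [Finset.sum_congr rfl fun j _ => this j, Finset.sum_ite_eq' Finset.univ k (fun j => X r j)]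
        simp [hM, hk0, hkL]
  have key2 : M.det = X.det * (X.det *
      (X.submatrix (fun i : Fin m => i.succ.castSucc) (fun i : Fin m => i.succ.castSucc)).det) := by
    rw [← det_submatrix_equiv_self (djEquiv m) M]
    have hMb : M.submatrix (djEquiv m) (djEquiv m) =
        fromBlocks (X.det • (1 : Matrix (Fin 2) (Fin 2) R))
          (Matrix.of fun (a : Fin 2) (j : Fin m) => X (djEquiv m (.inl a)) j.succ.castSucc)
          0
          (X.submatrix (fun i : Fin m => i.succ.castSucc) (fun i : Fin m => i.succ.castSucc)) := by
      ext (a | i) (b | j)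
      · fin_cases a <;> fin_cases b <;>
          simp [hM, hL, hL0, Ne.symm hL0, Matrix.one_apply, Fin.ext_iff, -Fin.val_eq_zero_iff]
      · fin_cases a <;> simp [hM, hmid0, hmidL, hL.symm, hmidL']
      · fin_cases b <;> simp [hM, hmid0, hmidL, hL0, hL.symm, hmidL']
      · simp [hM, hmid0, hmidL, hmidL']
    rw [hMb, det_fromBlocks_zero₂₁, det_smul, det_one, Fintype.card_fin]
    ring
  have key3 : B.det =
      (X.submatrix Fin.succ Fin.succ).det * (X.submatrix Fin.castSucc Fin.castSucc).det
      - (X.submatrix Fin.succ Fin.castSucc).det * (X.submatrix Fin.castSucc Fin.succ).det := by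
    rw [← det_submatrix_equiv_self (djEquiv m) B]
    have hBb : B.submatrix (djEquiv m) (djEquiv m) =
        fromBlocks (Matrix.of fun (a b : Fin 2) => B (djEquiv m (.inl a)) (djEquiv m (.inl b)))
          0
          (Matrix.of fun (i : Fin m) (b : Fin 2) => B i.succ.castSucc (djEquiv m (.inl b)))
          (1 : Matrix (Fin m) (Fin m) R) := by
      ext (a | i) (b | j)
      · fin_cases a <;> fin_cases b <;> simp
      · fin_cases a <;>
          simp [hB, hmid0, hmidL, (hmid0 j).symm, (hmidL j).symm, Ne.symm (hmid0 j), Ne.symm (hmidL j), hL0, hL.symm, hmidL', (hmidL' j).symm, (Fin.succ_ne_zero (Fin.castSucc j)).symm]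
      · fin_cases b <;> simp
      · simp only [submatrix_apply, djEquiv_inr, hB, Matrix.of_apply,
          if_neg (hmid0 j), if_neg (hmidL j), Matrix.one_apply]
        congr 1
        simp [Fin.ext_iff]
    rw [hBb, det_fromBlocks_zero₁₂, det_one, mul_one, det_fin_two]
    have e00 : B (djEquiv m (.inl 0)) (djEquiv m (.inl 0)) = (X.submatrix Fin.succ Fin.succ).det := by
      rw [djEquiv_inl0, hB0]
      simp [Fin.succAbove_zero]
    have e01 : B (djEquiv m (.inl 0)) (djEquiv m (.inl 1))
        = (-1 : R) ^ (m + 1) * (X.submatrix Fin.castSucc Fin.succ).det := by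
      rw [djEquiv_inl0, djEquiv_inl1, ← hL, hBL]
      simp [Fin.succAbove_zero]
    have e10 : B (djEquiv m (.inl 1)) (djEquiv m (.inl 0))
        = (-1 : R) ^ (m + 1) * (X.submatrix Fin.succ Fin.castSucc).det := by
      rw [djEquiv_inl0, djEquiv_inl1, ← hL, hB0, hL]
      simp [Fin.succAbove_last]
    have e11 : B (djEquiv m (.inl 1)) (djEquiv m (.inl 1))
        = (-1 : R) ^ ((m + 1) + (m + 1)) * (X.submatrix Fin.castSucc Fin.castSucc).det := by
      rw [djEquiv_inl1, ← hL, hBL, hL]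
      simp [Fin.succAbove_last]
    simp only [Matrix.of_apply, e00, e01, e10, e11]
    have hs : ((-1 : R) ^ (m + 1)) * ((-1 : R) ^ (m + 1)) = 1 := by
      rw [← pow_add, ← two_mul, pow_mul]
      simp
    have hs2 : ((-1 : R) ^ ((m + 1) + (m + 1))) = 1 := by
      rw [← two_mul, pow_mul]; simp
    rw [hs2, one_mul, mul_mul_mul_comm, hs, one_mul]
    ring
  calc X.det * (X.det *
      (X.submatrix (fun i : Fin m => i.succ.castSucc) (fun i : Fin m => i.succ.castSucc)).det)
      = M.det := key2.symm
    _ = (X * B).det := by rw [key1]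
    _ = X.det * B.det := det_mul X B
    _ = _ := by rw [key3]

theorem dj {m : ℕ} (X : Matrix (Fin (m + 2)) (Fin (m + 2)) ℚ) :
    X.det *
      (X.submatrix (fun i : Fin m => i.succ.castSucc) (fun i : Fin m => i.succ.castSucc)).det =
    (X.submatrix Fin.succ Fin.succ).det * (X.submatrix Fin.castSucc Fin.castSucc).det
      - (X.submatrix Fin.succ Fin.castSucc).det * (X.submatrix Fin.castSucc Fin.succ).det := by
  set G : Matrix (Fin (m + 2)) (Fin (m + 2)) (MvPolynomial (Fin (m + 2) × Fin (m + 2)) ℤ) :=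
    Matrix.of (fun i j => MvPolynomial.X (i, j)) with hG
  have hGdet : G.det ≠ 0 := by
    intro h
    have h1 : (MvPolynomial.eval₂Hom (RingHom.id ℤ)
        (fun p : Fin (m + 2) × Fin (m + 2) => if p.1 = p.2 then (1 : ℤ) else 0)) G.det = 0 := by
      rw [h]; simp
    rw [RingHom.map_det, RingHom.mapMatrix_apply] at h1
    have h2 : G.map (MvPolynomial.eval₂Hom (RingHom.id ℤ)
        (fun p : Fin (m + 2) × Fin (m + 2) => if p.1 = p.2 then (1 : ℤ) else 0)) = 1 := by
      ext i j
      by_cases hij : i = j <;> simp [hG, Matrix.one_apply, hij]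
    rw [h2, det_one] at h1
    exact one_ne_zero h1
  have hgen := mul_left_cancel₀ hGdet (weak_dj G)
  have happ := congrArg (MvPolynomial.eval₂Hom (Int.castRingHom ℚ) (fun p => X p.1 p.2)) hgen
  set φ := MvPolynomial.eval₂Hom (Int.castRingHom ℚ) (fun p : Fin (m + 2) × Fin (m + 2) => X p.1 p.2) with hφ
  have hmap : G.map φ = X := by
    ext i j; simp [hG, hφ]
  simp only [_root_.map_mul, _root_.map_sub, RingHom.map_det, RingHom.mapMatrix_apply,
    ← Matrix.submatrix_map, hmap] at happ
  exact happ

lemma hankel_condensation (c : ℕ → ℚ) (m n : ℕ) :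
    (Matrix.det (Matrix.of fun i j : Fin (m + 2) => c (n + i + j))) *
      (Matrix.det (Matrix.of fun i j : Fin m => c (n + 2 + i + j))) =
    (Matrix.det (Matrix.of fun i j : Fin (m + 1) => c (n + i + j))) *
      (Matrix.det (Matrix.of fun i j : Fin (m + 1) => c (n + 2 + i + j))) -
    (Matrix.det (Matrix.of fun i j : Fin (m + 1) => c (n + 1 + i + j))) ^ 2 := by
  have h := dj (Matrix.of fun i j : Fin (m + 2) => c (n + i + j))
  have e1 : (Matrix.of fun i j : Fin (m + 2) => c (n + i + j)).submatrix Fin.succ Fin.succ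
      = Matrix.of fun i j : Fin (m + 1) => c (n + 2 + i + j) := by
    ext i j
    simp only [Matrix.submatrix_apply, Matrix.of_apply]
    congr 1
    simp [Fin.val_succ]; omega
  have e2 : (Matrix.of fun i j : Fin (m + 2) => c (n + i + j)).submatrix Fin.castSucc Fin.castSucc
      = Matrix.of fun i j : Fin (m + 1) => c (n + i + j) := by
    ext i j
    simp only [Matrix.submatrix_apply, Matrix.of_apply, Fin.coe_castSucc]
  have e3 : (Matrix.of fun i j : Fin (m + 2) => c (n + i + j)).submatrix Fin.succ Fin.castSucc
      = Matrix.of fun i j : Fin (m + 1) => c (n + 1 + i + j) := by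
    ext i j
    simp only [Matrix.submatrix_apply, Matrix.of_apply, Fin.coe_castSucc]
    congr 1
    simp [Fin.val_succ]; omega
  have e4 : (Matrix.of fun i j : Fin (m + 2) => c (n + i + j)).submatrix Fin.castSucc Fin.succ
      = Matrix.of fun i j : Fin (m + 1) => c (n + 1 + i + j) := by
    ext i j
    simp only [Matrix.submatrix_apply, Matrix.of_apply, Fin.coe_castSucc]
    congr 1
    simp [Fin.val_succ]; omega
  have e5 : (Matrix.of fun i j : Fin (m + 2) => c (n + i + j)).submatrix
        (fun i : Fin m => i.succ.castSucc) (fun i : Fin m => i.succ.castSucc)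
      = Matrix.of fun i j : Fin m => c (n + 2 + i + j) := by
    ext i j
    simp only [Matrix.submatrix_apply, Matrix.of_apply, Fin.coe_castSucc]
    congr 1
    simp [Fin.val_succ]; omega
  rw [e1, e2, e3, e4, e5] at h
  rw [h]; ring

/-- The inner product in the closed formula. -/
noncomputable def gg (m j : ℕ) : ℚ :=
  ∏ i ∈ Finset.Icc 1 j, ((2 * m + i + j : ℚ) / (i + j : ℚ))

/-- The full product formula. -/
noncomputable def PP (m n : ℕ) : ℚ := ∏ j ∈ Finset.Icc 1 (n - 1), gg m j

lemma gg_pos (m j : ℕ) : 0 < gg m j := by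
  refine Finset.prod_pos fun i hi => ?_
  have h1 : 1 ≤ i := (Finset.mem_Icc.mp hi).1
  have h2 : (1 : ℚ) ≤ (i : ℚ) := by exact_mod_cast h1
  have h3 : (0 : ℚ) ≤ (j : ℚ) := Nat.cast_nonneg j
  have h4 : (0 : ℚ) ≤ (m : ℚ) := Nat.cast_nonneg m
  apply div_pos <;> linarith

lemma PP_pos (m n : ℕ) : 0 < PP m n :=
  Finset.prod_pos fun j _ => gg_pos m j

lemma prod_Icc_cast (x j : ℕ) :
    (∏ i ∈ Finset.Icc 1 j, ((x + i : ℕ) : ℚ)) = (Nat.factorial (x + j) : ℚ) / (Nat.factorial x : ℚ) := by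
  induction j with
  | zero => simp; rw [div_self (by positivity)]
  | succ k ih =>
    rw [Finset.prod_Icc_succ_top (by omega), ih]
    have hx : (Nat.factorial x : ℚ) ≠ 0 := by positivity
    rw [show x + (k + 1) = (x + k) + 1 by omega, Nat.factorial_succ]
    push_cast
    field_simp

lemma gg_eq (m j : ℕ) : gg m j =
    (Nat.factorial (2 * m + 2 * j) : ℚ) * (Nat.factorial j : ℚ)
      / ((Nat.factorial (2 * m + j) : ℚ) * (Nat.factorial (2 * j) : ℚ)) := by
  have h : gg m j = ∏ i ∈ Finset.Icc 1 j, (((2 * m + j + i : ℕ) : ℚ) / ((j + i : ℕ) : ℚ)) := by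
    refine Finset.prod_congr rfl fun i _ => ?_
    push_cast
    ring_nf
  rw [h, Finset.prod_div_distrib, prod_Icc_cast, prod_Icc_cast]
  rw [show 2 * m + j + j = 2 * m + 2 * j by omega, show j + j = 2 * j by omega]
  have h1 : (Nat.factorial (2 * m + j) : ℚ) ≠ 0 := by positivity
  have h2 : (Nat.factorial j : ℚ) ≠ 0 := by positivity
  have h3 : (Nat.factorial (2 * j) : ℚ) ≠ 0 := by positivity
  field_simp

lemma PP_step (m n : ℕ) : PP m (n + 1) = PP m n * gg m n := by
  cases n with
  | zero => norm_num [PP, gg]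
  | succ k =>
    rw [PP, PP, show k + 1 + 1 - 1 = k + 1 by omega, show k + 1 - 1 = k by omega,
      Finset.prod_Icc_succ_top (by omega)]

lemma keyK (m n : ℕ) :
    (gg (m + 1) (n + 1) - gg (m + 1) n) * gg (m + 2) n * gg m (n + 2)
      = gg (m + 1) n * gg (m + 1) (n + 1) * (gg (m + 1) (n + 2) - gg (m + 1) (n + 1)) := by
  have fs : ∀ k : ℕ, ((Nat.factorial (k + 1) : ℚ)) = ((k : ℚ) + 1) * (Nat.factorial k : ℚ) := by
    intro k; rw [Nat.factorial_succ]; push_cast; ring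
  rw [gg_eq, gg_eq, gg_eq, gg_eq, gg_eq]
  simp only [show 2 * (m + 1) + 2 * n = 2 * m + 2 * n + 2 by ring,
    show 2 * (m + 1) + n = 2 * m + n + 2 by ring,
    show 2 * (m + 1) + 2 * (n + 1) = 2 * m + 2 * n + 4 by ring,
    show 2 * (m + 1) + (n + 1) = 2 * m + n + 3 by ring,
    show 2 * (n + 1) = 2 * n + 2 by ring,
    show 2 * (m + 1) + 2 * (n + 2) = 2 * m + 2 * n + 6 by ring,
    show 2 * (m + 1) + (n + 2) = 2 * m + n + 4 by ring,
    show 2 * (n + 2) = 2 * n + 4 by ring,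
    show 2 * (m + 2) + 2 * n = 2 * m + 2 * n + 4 by ring,
    show 2 * (m + 2) + n = 2 * m + n + 4 by ring,
    show 2 * m + 2 * (n + 2) = 2 * m + 2 * n + 4 by ring,
    show 2 * m + (n + 2) = 2 * m + n + 2 by ring,
    show 2 * (m + 1) + (2 * n + 2) = 2 * m + 2 * n + 4 by ring,
    show 2 * (m + 1) + (2 * n + 4) = 2 * m + 2 * n + 6 by ring,
    show 2 * (m + 2) + (2 * n) = 2 * m + 2 * n + 4 by ring,
    show 2 * m + (2 * n + 4) = 2 * m + 2 * n + 4 by ring]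
  have f44 : ((Nat.factorial (2 * m + 2 * n + 4) : ℚ))
      = (2 * (m : ℚ) + 2 * n + 4) * (2 * (m : ℚ) + 2 * n + 3) * (Nat.factorial (2 * m + 2 * n + 2) : ℚ) := by
    rw [show 2 * m + 2 * n + 4 = (2 * m + 2 * n + 3) + 1 by omega, fs,
      show 2 * m + 2 * n + 3 = (2 * m + 2 * n + 2) + 1 by omega, fs]
    push_cast; ring
  have f46 : ((Nat.factorial (2 * m + 2 * n + 6) : ℚ))
      = (2 * (m : ℚ) + 2 * n + 6) * (2 * (m : ℚ) + 2 * n + 5) * (2 * (m : ℚ) + 2 * n + 4)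
        * (2 * (m : ℚ) + 2 * n + 3) * (Nat.factorial (2 * m + 2 * n + 2) : ℚ) := by
    rw [show 2 * m + 2 * n + 6 = (2 * m + 2 * n + 5) + 1 by omega, fs,
      show 2 * m + 2 * n + 5 = (2 * m + 2 * n + 4) + 1 by omega, fs, f44]
    push_cast; ring
  have fB3 : ((Nat.factorial (2 * m + n + 3) : ℚ))
      = (2 * (m : ℚ) + n + 3) * (Nat.factorial (2 * m + n + 2) : ℚ) := by
    rw [show 2 * m + n + 3 = (2 * m + n + 2) + 1 by omega, fs]; push_cast; ring
  have fB4 : ((Nat.factorial (2 * m + n + 4) : ℚ))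
      = (2 * (m : ℚ) + n + 4) * (2 * (m : ℚ) + n + 3) * (Nat.factorial (2 * m + n + 2) : ℚ) := by
    rw [show 2 * m + n + 4 = (2 * m + n + 3) + 1 by omega, fs, fB3]; push_cast; ring
  have fC1 : ((Nat.factorial (n + 1) : ℚ)) = ((n : ℚ) + 1) * (Nat.factorial n : ℚ) := fs n
  have fC2 : ((Nat.factorial (n + 2) : ℚ))
      = ((n : ℚ) + 2) * ((n : ℚ) + 1) * (Nat.factorial n : ℚ) := by
    rw [show n + 2 = (n + 1) + 1 by omega, fs, fC1]; push_cast; ring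
  have fD2 : ((Nat.factorial (2 * n + 2) : ℚ))
      = (2 * (n : ℚ) + 2) * (2 * (n : ℚ) + 1) * (Nat.factorial (2 * n) : ℚ) := by
    rw [show 2 * n + 2 = (2 * n + 1) + 1 by omega, fs,
      show 2 * n + 1 = (2 * n) + 1 by omega, fs]
    push_cast; ring
  have fD4 : ((Nat.factorial (2 * n + 4) : ℚ))
      = (2 * (n : ℚ) + 4) * (2 * (n : ℚ) + 3) * (2 * (n : ℚ) + 2) * (2 * (n : ℚ) + 1)
        * (Nat.factorial (2 * n) : ℚ) := by
    rw [show 2 * n + 4 = (2 * n + 3) + 1 by omega, fs,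
      show 2 * n + 3 = (2 * n + 2) + 1 by omega, fs, fD2]
    push_cast; ring
  rw [f46, f44, fB3, fB4, fC1, fC2, fD2, fD4]
  have hA : ((Nat.factorial (2 * m + 2 * n + 2) : ℚ)) ≠ 0 := by positivity
  have hB : ((Nat.factorial (2 * m + n + 2) : ℚ)) ≠ 0 := by positivity
  have hC : ((Nat.factorial n : ℚ)) ≠ 0 := by positivity
  have hD : ((Nat.factorial (2 * n) : ℚ)) ≠ 0 := by positivity
  have p1 : (0:ℚ) < (m : ℚ) + 1 := by positivity
  have p2 : (0:ℚ) < (n : ℚ) + 1 := by positivity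
  field_simp
  ring

lemma catalan_cast (n : ℕ) :
    (catalan n : ℚ) = (Nat.centralBinom n : ℚ) / ((n : ℚ) + 1) := by
  rw [catalan_eq_centralBinom_div, Nat.cast_div (Nat.succ_dvd_centralBinom n) (by positivity)]
  push_cast
  ring

lemma catalan_ratio (n : ℕ) :
    (catalan (n + 1) : ℚ) = (catalan n : ℚ) * (2 * (2 * (n : ℚ) + 1)) / ((n : ℚ) + 2) := by
  have h := Nat.succ_mul_centralBinom_succ n
  have h' : ((n : ℚ) + 1) * (Nat.centralBinom (n + 1) : ℚ)
      = 2 * (2 * (n : ℚ) + 1) * (Nat.centralBinom n : ℚ) := by exact_mod_cast h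
  rw [catalan_cast, catalan_cast]
  have h1 : ((n : ℚ) + 1) ≠ 0 := by positivity
  have h2 : ((n : ℚ) + 2) ≠ 0 := by positivity
  field_simp
  push_cast
  nlinarith [h']

lemma gg_zero (j : ℕ) : gg 0 j = 1 := by
  refine Finset.prod_eq_one fun i hi => ?_
  have h1 : 1 ≤ i := (Finset.mem_Icc.mp hi).1
  have h2 : (1 : ℚ) ≤ (i : ℚ) := by exact_mod_cast h1
  have h3 : (0 : ℚ) ≤ (j : ℚ) := Nat.cast_nonneg j
  have h4 : ((i : ℚ) + (j : ℚ)) ≠ 0 := by linarith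
  rw [Nat.cast_zero]
  rw [show 2 * (0:ℚ) + (i:ℚ) + (j:ℚ) = (i:ℚ) + (j:ℚ) by ring]
  exact div_self h4

lemma PP_zero (n : ℕ) : PP 0 n = 1 := by
  unfold PP
  exact Finset.prod_eq_one fun j _ => gg_zero j

lemma gg_one (n : ℕ) : gg 1 n = 2 * (2 * (n : ℚ) + 1) / ((n : ℚ) + 2) := by
  rw [gg_eq]
  rw [show 2 * 1 + 2 * n = 2 * n + 2 by omega, show 2 * 1 + n = n + 2 by omega]
  have fs : ∀ k : ℕ, ((Nat.factorial (k + 1) : ℚ)) = ((k : ℚ) + 1) * (Nat.factorial k : ℚ) := by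
    intro k; rw [Nat.factorial_succ]; push_cast; ring
  rw [show 2 * n + 2 = (2 * n + 1) + 1 by omega, fs, show 2 * n + 1 = (2 * n) + 1 by omega, fs,
    show n + 2 = (n + 1) + 1 by omega, fs, fs]
  have hC : ((Nat.factorial n : ℚ)) ≠ 0 := by positivity
  have hD : ((Nat.factorial (2 * n) : ℚ)) ≠ 0 := by positivity
  have h1 : ((n : ℚ) + 1) ≠ 0 := by positivity
  have h2 : ((n : ℚ) + 2) ≠ 0 := by positivity
  field_simp
  push_cast
  ring

lemma catalan_eq_PP_one (n : ℕ) : (catalan n : ℚ) = PP 1 n := by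
  induction n with
  | zero => simp [PP]
  | succ k ih =>
    rw [PP_step, ← ih, catalan_ratio, gg_one]
    have h2 : ((k : ℚ) + 2) ≠ 0 := by positivity
    field_simp

lemma star (m n : ℕ) :
    PP (m + 2) n * PP m (n + 2) = PP (m + 1) n * PP (m + 1) (n + 2) - PP (m + 1) (n + 1) ^ 2 := by
  induction n with
  | zero =>
    have h0 : ∀ a : ℕ, PP a 0 = 1 := fun a => by simp [PP]
    have h1 : ∀ a : ℕ, PP a 1 = 1 := fun a => by simp [PP]
    have h2 : ∀ a : ℕ, PP a 2 = gg a 1 := fun a => by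
      rw [show (2 : ℕ) = 1 + 1 from rfl, PP_step, h1, one_mul]
    rw [h0, h0, h1, h2, h2]
    have hg : ∀ a : ℕ, gg a 1 = (2 * (a : ℚ) + 2) / 2 := by
      intro a
      unfold gg
      rw [Finset.Icc_self, Finset.prod_singleton]
      norm_num
      ring
    rw [hg, hg]
    push_cast
    field_simp
    ring
  | succ k ih =>
    have e1 : PP (m + 2) (k + 1) = PP (m + 2) k * gg (m + 2) k := PP_step _ _
    have e2 : PP m (k + 3) = PP m (k + 2) * gg m (k + 2) := by
      rw [show k + 3 = (k + 2) + 1 by omega]; exact PP_step _ _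
    have e3 : PP (m + 1) (k + 1) = PP (m + 1) k * gg (m + 1) k := PP_step _ _
    have e4 : PP (m + 1) (k + 2) = PP (m + 1) (k + 1) * gg (m + 1) (k + 1) := by
      rw [show k + 2 = (k + 1) + 1 by omega]; exact PP_step _ _
    have e5 : PP (m + 1) (k + 3) = PP (m + 1) (k + 2) * gg (m + 1) (k + 2) := by
      rw [show k + 3 = (k + 2) + 1 by omega]; exact PP_step _ _
    have hK := keyK m k
    rw [e4, e3] at ih
    rw [show k + 1 + 2 = k + 3 by omega, show k + 1 + 1 = k + 2 by omega]
    rw [e1, e2, e5, e4, e3]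
    linear_combination (gg (m + 2) k * gg m (k + 2)) * ih + (PP (m + 1) k) ^ 2 * gg (m + 1) k * hK

noncomputable def hdet (m n : ℕ) : ℚ :=
  Matrix.det (Matrix.of fun i j : Fin m => (catalan (n + i + j) : ℚ))

lemma main_all : ∀ m : ℕ, (∀ n, hdet m n = PP m n) ∧ (∀ n, hdet (m + 1) n = PP (m + 1) n) := by
  intro m
  induction m with
  | zero =>
    constructor
    · intro n
      rw [PP_zero]
      exact Matrix.det_fin_zero
    · intro n
      have : hdet 1 n = (catalan n : ℚ) := by
        unfold hdet
        rw [Matrix.det_fin_one]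
        simp
      rw [this, catalan_eq_PP_one]
  | succ m ih =>
    refine ⟨ih.2, fun n => ?_⟩
    have hc := hankel_condensation (fun k => (catalan k : ℚ)) m n
    have hc' : hdet (m + 2) n * hdet m (n + 2)
        = hdet (m + 1) n * hdet (m + 1) (n + 2) - hdet (m + 1) (n + 1) ^ 2 := hc
    have hPm := ih.1 (n + 2)
    have key : hdet (m + 2) n * PP m (n + 2) = PP (m + 2) n * PP m (n + 2) := by
      calc hdet (m + 2) n * PP m (n + 2) = hdet (m + 2) n * hdet m (n + 2) := by rw [hPm]
        _ = hdet (m + 1) n * hdet (m + 1) (n + 2) - hdet (m + 1) (n + 1) ^ 2 := hc'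
        _ = PP (m + 1) n * PP (m + 1) (n + 2) - PP (m + 1) (n + 1) ^ 2 := by
            rw [ih.2 n, ih.2 (n + 2), ih.2 (n + 1)]
        _ = PP (m + 2) n * PP m (n + 2) := (star m n).symm
    exact mul_right_cancel₀ (ne_of_gt (PP_pos m (n + 2))) key

theorem shifted_catalan_hankel_det (m n : ℕ) (hm : 1 ≤ m) :
    Matrix.det (Matrix.of fun i j : Fin m => (catalan (n + i + j) : ℚ)) =
      ∏ j ∈ Finset.Icc 1 (n - 1), ∏ i ∈ Finset.Icc 1 j,
        ((2 * m + i + j : ℚ) / (i + j : ℚ)) := by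
  have h := (main_all m).1 n
  unfold hdet PP gg at h
  exact h
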